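/- Under the assumption Σ_{(i,j)} r_i^{\underline{2}} c_j^{\underline{2}}/(2 N^{\underline{2}}) ≤ C for all large N, the variance of the number F of matched double edges satisfies Var(F) ≤ μ(N) · (1 + 2√(2μ(N)) (1+O(1/N)) + O(μ(N)/N)), where μ(N) = E[F]. -/

import Mathlib

open Finset

/-- A double edge for entry `(i,j)` (rows and columns indexed by `ℕ`). -/
def IsDoubleEdge {N : ℕ} (rowOf colOf : Fin N → ℕ) (i j : ℕ)
    (B : Finset (Fin N × Fin N)) : Prop :=
  B.card = 2 ∧ (∀ p ∈ B, rowOf p.1 = i ∧ colOf p.2 = j) ∧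
    ∀ p ∈ B, ∀ q ∈ B, p ≠ q → p.1 ≠ q.1 ∧ p.2 ≠ q.2

instance {N : ℕ} (rowOf colOf : Fin N → ℕ) (i j : ℕ) :
    DecidablePred (IsDoubleEdge rowOf colOf i j) := fun _ =>
  by unfold IsDoubleEdge; infer_instance

/-- `F σ`: the number of matched double edges under the matching `σ`. -/
def numDoubleEdges {N : ℕ} (rowOf colOf : Fin N → ℕ) (σ : Equiv.Perm (Fin N)) : ℕ :=
  ∑ i ∈ Finset.range N, ∑ j ∈ Finset.range N,
    (univ.filter (fun B : Finset (Fin N × Fin N) =>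
        IsDoubleEdge rowOf colOf i j B ∧ ∀ p ∈ B, σ p.1 = p.2)).card

/-- `E[F]` for size `N`. -/
noncomputable def expF (rowOf colOf : (N : ℕ) → Fin N → ℕ) (N : ℕ) : ℝ :=
  (∑ σ : Equiv.Perm (Fin N), (numDoubleEdges (rowOf N) (colOf N) σ : ℝ)) / Nat.factorial N

/-- `Var(F)` for size `N`. -/
noncomputable def varF (rowOf colOf : (N : ℕ) → Fin N → ℕ) (N : ℕ) : ℝ :=
  (∑ σ : Equiv.Perm (Fin N), (numDoubleEdges (rowOf N) (colOf N) σ : ℝ) ^ 2)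
      / Nat.factorial N
    - (expF rowOf colOf N) ^ 2

/-- `μ(N) = ∑_{i,j} r_i^{\underline{2}} c_j^{\underline{2}} / (2 N^{\underline{2}})`. -/
noncomputable def muN (r c : ℕ → ℕ → ℕ) (N : ℕ) : ℝ :=
  ∑ i ∈ Finset.range N, ∑ j ∈ Finset.range N,
    (Nat.descFactorial (r N i) 2 * Nat.descFactorial (c N j) 2 : ℝ)
      / (2 * Nat.descFactorial N 2)

namespace VarFP

variable {N : ℕ}

def Matched (σ : Equiv.Perm (Fin N)) (S : Finset (Fin N × Fin N)) : Prop :=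
  ∀ p ∈ S, σ p.1 = p.2

instance (σ : Equiv.Perm (Fin N)) (S : Finset (Fin N × Fin N)) : Decidable (Matched σ S) := by
  unfold Matched; infer_instance

def extCount (N : ℕ) (S : Finset (Fin N × Fin N)) : ℕ :=
  (univ.filter (fun σ : Equiv.Perm (Fin N) => Matched σ S)).card

theorem extCount_eq (S : Finset (Fin N × Fin N))
    (hinj : ∀ p ∈ S, ∀ q ∈ S, (p.1 = q.1 ↔ p.2 = q.2)) :
    extCount N S = Nat.factorial (N - S.card) := by
  classical
  set A : Finset (Fin N) := S.image Prod.fst with hAdef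
  set Bs : Finset (Fin N) := S.image Prod.snd with hBdef
  have hA : A.card = S.card := by
    apply card_image_of_injOn
    intro p hp q hq h
    exact Prod.ext h ((hinj p hp q hq).1 h)
  have hB : Bs.card = S.card := by
    apply card_image_of_injOn
    intro p hp q hq h
    exact Prod.ext ((hinj p hp q hq).2 h) h
  -- the partial map
  have hex : ∀ x ∈ A, ∃ p ∈ S, p.1 = x := by
    intro x hx
    simpa using mem_image.mp hx
  set g : Fin N → Fin N := fun x =>
    if h : ∃ p ∈ S, p.1 = x then (Classical.choose h).2 else x with hgdef
  have hg : ∀ p ∈ S, g p.1 = p.2 := by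
    intro p hp
    have h : ∃ q ∈ S, q.1 = p.1 := ⟨p, hp, rfl⟩
    have hq := Classical.choose_spec h
    simp only [hgdef, dif_pos h]
    exact (hinj _ hq.1 p hp).1 hq.2
  have hgmem : ∀ x ∈ A, g x ∈ Bs := by
    intro x hx
    obtain ⟨p, hp, rfl⟩ := hex x hx
    rw [hg p hp]
    exact mem_image_of_mem _ hp
  set sA : Set (Fin N) := ↑A
  set sB : Set (Fin N) := ↑Bs
  have hf : Function.Bijective (fun x : sA => (⟨g x, hgmem x x.2⟩ : sB)) := by
    constructor
    · rintro ⟨x, hx⟩ ⟨y, hy⟩ h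
      obtain ⟨p, hp, rfl⟩ := hex x hx
      obtain ⟨q, hq, rfl⟩ := hex y hy
      simp only [Subtype.mk_eq_mk, hg p hp, hg q hq] at h
      exact Subtype.ext ((hinj p hp q hq).2 h)
    · rintro ⟨y, hy⟩
      obtain ⟨q, hq, rfl⟩ : ∃ p ∈ S, p.2 = y := by simpa [sB, hBdef] using hy
      exact ⟨⟨q.1, mem_image_of_mem _ hq⟩, Subtype.ext (hg q hq)⟩
  set e₀ : sA ≃ sB := Equiv.ofBijective _ hf with he₀
  have key : ∀ σ : Equiv.Perm (Fin N), Matched σ S ↔ ∀ x : sA, σ x = (e₀ x : Fin N) := by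
    intro σ
    constructor
    · rintro hm ⟨x, hx⟩
      obtain ⟨p, hp, rfl⟩ := hex x hx
      have : (e₀ ⟨p.1, hx⟩ : Fin N) = g p.1 := rfl
      rw [this, hg p hp]
      exact hm p hp
    · intro h p hp
      have := h ⟨p.1, mem_image_of_mem _ hp⟩
      rw [show (e₀ ⟨p.1, mem_image_of_mem _ hp⟩ : Fin N) = g p.1 from rfl, hg p hp] at this
      exact this
  have hcard1 : extCount N S = Fintype.card {σ : Equiv.Perm (Fin N) // Matched σ S} := by
    rw [Fintype.card_subtype]
    rfl
  have hcard2 : Fintype.card {σ : Equiv.Perm (Fin N) // Matched σ S}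
      = Fintype.card {e : Fin N ≃ Fin N // ∀ x : sA, e x = (e₀ x : Fin N)} := by
    apply Fintype.card_congr
    exact Equiv.subtypeEquivRight key
  have hcard3 : Fintype.card {e : Fin N ≃ Fin N // ∀ x : sA, e x = (e₀ x : Fin N)}
      = Fintype.card ((sAᶜ : Set (Fin N)) ≃ (sBᶜ : Set (Fin N))) :=
    Fintype.card_congr (Equiv.Set.compl e₀)
  have hcA : Fintype.card (sAᶜ : Set (Fin N)) = N - S.card := by
    rw [Fintype.card_compl_set]
    simp [sA, hA]
  have hcB : Fintype.card (sBᶜ : Set (Fin N)) = N - S.card := by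
    rw [Fintype.card_compl_set]
    simp [sB, hB]
  have hcard4 : Fintype.card ((sAᶜ : Set (Fin N)) ≃ (sBᶜ : Set (Fin N)))
      = Nat.factorial (N - S.card) := by
    rw [Fintype.card_equiv (Fintype.equivOfCardEq (hcA.trans hcB.symm)), hcA]
  rw [hcard1, hcard2, hcard3, hcard4]

theorem extCount_le (S : Finset (Fin N × Fin N)) :
    extCount N S ≤ Nat.factorial (N - S.card) := by
  classical
  by_cases hinj : ∀ p ∈ S, ∀ q ∈ S, (p.1 = q.1 ↔ p.2 = q.2)
  · exact (extCount_eq S hinj).le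
  · push_neg at hinj
    obtain ⟨p, hp, q, hq, hbad⟩ := hinj
    have : extCount N S = 0 := by
      rw [extCount, card_eq_zero, filter_eq_empty_iff]
      intro σ _ hm
      have h1 := hm p hp
      have h2 := hm q hq
      rcases hbad with ⟨h, hne⟩ | ⟨hne, h⟩
      · exact hne (by rw [← h1, ← h2, h])
      · exact hne (σ.injective (by rw [h1, h2, h]))
    simp [this]


variable {N : ℕ}

def GoodB (rowOf colOf : Fin N → ℕ) (B : Finset (Fin N × Fin N)) : Prop :=
  B.card = 2 ∧ ∀ p ∈ B, ∀ q ∈ B,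
    rowOf p.1 = rowOf q.1 ∧ colOf p.2 = colOf q.2 ∧ (p ≠ q → p.1 ≠ q.1 ∧ p.2 ≠ q.2)

instance (rowOf colOf : Fin N → ℕ) (B : Finset (Fin N × Fin N)) :
    Decidable (GoodB rowOf colOf B) := by unfold GoodB; infer_instance

theorem goodB_of_de {rowOf colOf : Fin N → ℕ} {i j : ℕ} {B : Finset (Fin N × Fin N)}
    (h : IsDoubleEdge rowOf colOf i j B) : GoodB rowOf colOf B := by
  obtain ⟨h1, h2, h3⟩ := h
  refine ⟨h1, fun p hp q hq => ⟨?_, ?_, h3 p hp q hq⟩⟩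
  · rw [(h2 p hp).1, (h2 q hq).1]
  · rw [(h2 p hp).2, (h2 q hq).2]

theorem de_of_goodB {rowOf colOf : Fin N → ℕ} {B : Finset (Fin N × Fin N)}
    (h : GoodB rowOf colOf B) {p : Fin N × Fin N} (hp : p ∈ B) :
    IsDoubleEdge rowOf colOf (rowOf p.1) (colOf p.2) B := by
  obtain ⟨h1, h2⟩ := h
  exact ⟨h1, fun q hq => ⟨((h2 q hq p hp).1), ((h2 q hq p hp).2.1)⟩,
    fun a ha b hb hne => (h2 a ha b hb).2.2 hne⟩

theorem goodB_nonempty {rowOf colOf : Fin N → ℕ} {B : Finset (Fin N × Fin N)}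
    (h : GoodB rowOf colOf B) : B.Nonempty :=
  card_pos.mp (by rw [h.1]; norm_num)

/-- Collapsing the double sum over (i,j) to a single filter. -/
theorem collapse (rowOf colOf : Fin N → ℕ)
    (hrowlt : ∀ t, rowOf t < N) (hcollt : ∀ t, colOf t < N)
    (m : Finset (Fin N × Fin N) → Prop) [DecidablePred m] :
    ∑ i ∈ Finset.range N, ∑ j ∈ Finset.range N,
      (univ.filter (fun B : Finset (Fin N × Fin N) =>
        IsDoubleEdge rowOf colOf i j B ∧ m B)).card
    = (univ.filter (fun B : Finset (Fin N × Fin N) => GoodB rowOf colOf B ∧ m B)).card := by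
  classical
  rw [← Finset.sum_product']
  rw [← Finset.card_biUnion]
  · congr 1
    ext B
    simp only [mem_biUnion, mem_filter, mem_univ, true_and, mem_product, mem_range]
    constructor
    · rintro ⟨⟨i, j⟩, ⟨-, -⟩, hde, hm⟩
      exact ⟨goodB_of_de hde, hm⟩
    · rintro ⟨hg, hm⟩
      obtain ⟨p, hp⟩ := goodB_nonempty hg
      exact ⟨(rowOf p.1, colOf p.2), ⟨hrowlt _, hcollt _⟩, de_of_goodB hg hp, hm⟩
  · rintro ⟨i, j⟩ - ⟨i', j'⟩ - hne
    simp only [disjoint_left, mem_filter, mem_univ, true_and]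
    rintro B ⟨hde, -⟩ ⟨hde', -⟩
    obtain ⟨p, hp⟩ : B.Nonempty := goodB_nonempty (goodB_of_de hde)
    apply hne
    have h1 := (hde.2.1 p hp)
    have h2 := (hde'.2.1 p hp)
    rw [Prod.ext_iff]
    exact ⟨h1.1.symm.trans h2.1, h1.2.symm.trans h2.2⟩

/-- Exact count of double-edge sets at entry (i,j). -/
theorem count_de (rowOf colOf : Fin N → ℕ) (i j : ℕ) :
    2 * (univ.filter (fun B : Finset (Fin N × Fin N) =>
        IsDoubleEdge rowOf colOf i j B)).card
      = Nat.descFactorial ((univ.filter (fun t => rowOf t = i)).card) 2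
        * Nat.descFactorial ((univ.filter (fun t => colOf t = j)).card) 2 := by
  classical
  set Ri := univ.filter (fun t => rowOf t = i) with hRi
  set Cj := univ.filter (fun t => colOf t = j) with hCj
  set T : Finset ((Fin N × Fin N) × (Fin N × Fin N)) := Ri.offDiag ×ˢ Cj.offDiag with hT
  set f : (Fin N × Fin N) × (Fin N × Fin N) → Finset (Fin N × Fin N) :=
    fun t => {(t.1.1, t.2.1), (t.1.2, t.2.2)} with hfdef
  set Dij := univ.filter (fun B : Finset (Fin N × Fin N) =>
      IsDoubleEdge rowOf colOf i j B) with hDij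
  have hmaps : ∀ t ∈ T, f t ∈ Dij := by
    rintro ⟨⟨a, a'⟩, ⟨b, b'⟩⟩ ht
    simp only [hT, mem_product, mem_offDiag, hRi, hCj, mem_filter, mem_univ, true_and] at ht
    obtain ⟨⟨ha, ha', haa⟩, ⟨hb, hb', hbb⟩⟩ := ht
    have hne : ((a, b) : Fin N × Fin N) ≠ (a', b') := by
      intro h; exact haa (congrArg Prod.fst h)
    simp only [hDij, mem_filter, mem_univ, true_and]
    refine ⟨?_, ?_, ?_⟩
    · rw [card_insert_of_notMem (by simp [hne]), card_singleton]
    · intro p hp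
      simp only [hfdef, mem_insert, mem_singleton] at hp
      rcases hp with rfl | rfl
      · exact ⟨ha, hb⟩
      · exact ⟨ha', hb'⟩
    · intro p hp q hq hpq
      simp only [hfdef, mem_insert, mem_singleton] at hp hq
      rcases hp with rfl | rfl <;> rcases hq with rfl | rfl <;>
        simp_all [Prod.ext_iff] <;> tauto
  have hfiber : ∀ B ∈ Dij, (T.filter (fun t => f t = B)).card = 2 := by
    intro B hB
    simp only [hDij, mem_filter, mem_univ, true_and] at hB
    obtain ⟨hc2, hmem, hdist⟩ := hB
    obtain ⟨p, q, hpq, rfl⟩ := Finset.card_eq_two.mp hc2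
    have hp : p ∈ ({p, q} : Finset (Fin N × Fin N)) := by simp
    have hq : q ∈ ({p, q} : Finset (Fin N × Fin N)) := by simp
    have h1 := hdist p hp q hq hpq
    have key : T.filter (fun t => f t = {p, q})
        = {((p.1, q.1), (p.2, q.2)), ((q.1, p.1), (q.2, p.2))} := by
      ext ⟨⟨a, a'⟩, ⟨b, b'⟩⟩
      simp only [mem_filter, hT, mem_product, mem_offDiag, hRi, hCj, mem_filter,
        mem_univ, true_and, mem_insert, mem_singleton, Prod.ext_iff]
      constructor
      · rintro ⟨⟨⟨ha, ha', haa⟩, ⟨hb, hb', hbb⟩⟩, hfe⟩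
        have hab : ((a, b) : Fin N × Fin N) ∈ ({p, q} : Finset (Fin N × Fin N)) := by
          rw [← hfe]; simp [hfdef]
        have hab' : ((a', b') : Fin N × Fin N) ∈ ({p, q} : Finset (Fin N × Fin N)) := by
          rw [← hfe]; simp [hfdef]
        simp only [mem_insert, mem_singleton] at hab hab'
        rcases hab with h | h <;> rcases hab' with h' | h'
        · exact absurd (congrArg Prod.fst (h.trans h'.symm)) haa
        · left
          rw [← h, ← h']
          exact ⟨⟨rfl, rfl⟩, rfl, rfl⟩
        · right
          rw [← h, ← h']
          exact ⟨⟨rfl, rfl⟩, rfl, rfl⟩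
        · exact absurd (congrArg Prod.fst (h.trans h'.symm)) haa
      · have hpRi : rowOf p.1 = i := (hmem p hp).1
        have hqRi : rowOf q.1 = i := (hmem q hq).1
        have hpCj : colOf p.2 = j := (hmem p hp).2
        have hqCj : colOf q.2 = j := (hmem q hq).2
        rintro (⟨⟨rfl, rfl⟩, rfl, rfl⟩ | ⟨⟨rfl, rfl⟩, rfl, rfl⟩)
        · refine ⟨⟨⟨hpRi, hqRi, h1.1⟩, ⟨hpCj, hqCj, h1.2⟩⟩, ?_⟩
          simp [hfdef]
        · refine ⟨⟨⟨hqRi, hpRi, fun hh => h1.1 hh.symm⟩,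
            ⟨hqCj, hpCj, fun hh => h1.2 hh.symm⟩⟩, ?_⟩
          simp only [hfdef]
          rw [pair_comm]
    rw [key]
    rw [card_insert_of_notMem, card_singleton]
    simp only [mem_singleton, Prod.ext_iff, not_and]
    intro hh
    exact absurd hh.1 h1.1
  have hsum := Finset.card_eq_sum_card_fiberwise hmaps
  rw [Finset.sum_congr rfl hfiber] at hsum
  rw [Finset.sum_const, smul_eq_mul] at hsum
  have hT2 : T.card = Nat.descFactorial Ri.card 2 * Nat.descFactorial Cj.card 2 := by
    rw [hT, card_product, offDiag_card, offDiag_card]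
    have h2 : ∀ r : ℕ, r * r - r = Nat.descFactorial r 2 := by
      intro r
      rw [Nat.descFactorial_succ, Nat.descFactorial_one, Nat.sub_one_mul]
    rw [h2, h2]
  rw [Nat.mul_comm, ← hsum]
  exact hT2


theorem goodB_hinj {rowOf colOf : Fin N → ℕ} {B : Finset (Fin N × Fin N)}
    (h : GoodB rowOf colOf B) :
    ∀ p ∈ B, ∀ q ∈ B, (p.1 = q.1 ↔ p.2 = q.2) := by
  intro p hp q hq
  constructor
  · intro h1
    by_cases hpq : p = q
    · rw [hpq]
    · exact absurd h1 ((h.2 p hp q hq).2.2 hpq).1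
  · intro h2
    by_cases hpq : p = q
    · rw [hpq]
    · exact absurd h2 ((h.2 p hp q hq).2.2 hpq).2

theorem shared_bound (rowOf colOf : Fin N → ℕ) (p : Fin N × Fin N) :
    (univ.filter (fun B : Finset (Fin N × Fin N) => GoodB rowOf colOf B ∧ p ∈ B)).card
      ≤ ((univ.filter (fun t => rowOf t = rowOf p.1)).card - 1)
        * ((univ.filter (fun t => colOf t = colOf p.2)).card - 1) := by
  classical
  set Ri := univ.filter (fun t => rowOf t = rowOf p.1) with hRi
  set Cj := univ.filter (fun t => colOf t = colOf p.2) with hCj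
  have hkey : (univ.filter (fun B : Finset (Fin N × Fin N) =>
      GoodB rowOf colOf B ∧ p ∈ B)).card
      ≤ (((Ri.erase p.1) ×ˢ (Cj.erase p.2)).image
          (fun q : Fin N × Fin N => ({q} : Finset (Fin N × Fin N)))).card := by
    apply Finset.card_le_card_of_injOn (fun B => B.erase p)
    · intro B hB
      simp only [mem_coe, mem_filter, mem_univ, true_and] at hB
      obtain ⟨hg, hpB⟩ := hB
      have hc : (B.erase p).card = 1 := by rw [card_erase_of_mem hpB, hg.1]
      obtain ⟨q, hq⟩ := card_eq_one.mp hc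
      have hqB : q ∈ B.erase p := by rw [hq]; exact mem_singleton_self q
      have hqp : q ≠ p := (mem_erase.mp hqB).1
      have hqB' : q ∈ B := (mem_erase.mp hqB).2
      have hco := (hg.2 q hqB' p hpB).2.2 hqp
      simp only [mem_coe]
      rw [hq]
      apply mem_image_of_mem
      rw [mem_product]
      have hr1 : q.1 ∈ Ri := by
        simp only [hRi, mem_filter, mem_univ, true_and]
        exact (hg.2 q hqB' p hpB).1
      have hc1 : q.2 ∈ Cj := by
        simp only [hCj, mem_filter, mem_univ, true_and]
        exact (hg.2 q hqB' p hpB).2.1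
      exact ⟨mem_erase.mpr ⟨hco.1, hr1⟩, mem_erase.mpr ⟨hco.2, hc1⟩⟩
    · intro B1 h1 B2 h2 he
      simp only [coe_filter, Set.mem_setOf_eq, mem_univ, true_and] at h1 h2
      simp only at he
      rw [← insert_erase h1.2, ← insert_erase h2.2, he]
  refine hkey.trans ?_
  rw [Finset.card_image_of_injective _ (fun a b h => singleton_inj.mp h), card_product,
    card_erase_of_mem, card_erase_of_mem]
  · simp only [hCj, mem_filter, mem_univ, true_and]
  · simp only [hRi, mem_filter, mem_univ, true_and]


theorem matched_union {σ : Equiv.Perm (Fin N)} {B B' : Finset (Fin N × Fin N)} :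
    Matched σ (B ∪ B') ↔ Matched σ B ∧ Matched σ B' := by
  unfold Matched
  exact forall_mem_union

theorem numDoubleEdges_eq (rowOf colOf : Fin N → ℕ)
    (hrowlt : ∀ t, rowOf t < N) (hcollt : ∀ t, colOf t < N) (σ : Equiv.Perm (Fin N)) :
    numDoubleEdges rowOf colOf σ
      = (univ.filter (fun B => GoodB rowOf colOf B ∧ Matched σ B)).card := by
  classical
  rw [numDoubleEdges, ← collapse rowOf colOf hrowlt hcollt (fun B => Matched σ B)]
  rfl

theorem sumF (rowOf colOf : Fin N → ℕ)
    (hrowlt : ∀ t, rowOf t < N) (hcollt : ∀ t, colOf t < N) :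
    ∑ σ : Equiv.Perm (Fin N), numDoubleEdges rowOf colOf σ
      = (univ.filter (fun B => GoodB rowOf colOf B)).card * Nat.factorial (N - 2) := by
  classical
  calc ∑ σ : Equiv.Perm (Fin N), numDoubleEdges rowOf colOf σ
      = ∑ σ : Equiv.Perm (Fin N), ∑ B : Finset (Fin N × Fin N),
          (if GoodB rowOf colOf B ∧ Matched σ B then 1 else 0) := by
        refine Finset.sum_congr rfl fun σ _ => ?_
        rw [numDoubleEdges_eq rowOf colOf hrowlt hcollt σ, Finset.card_filter]
    _ = ∑ B : Finset (Fin N × Fin N), ∑ σ : Equiv.Perm (Fin N),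
          (if GoodB rowOf colOf B ∧ Matched σ B then 1 else 0) := Finset.sum_comm
    _ = ∑ B : Finset (Fin N × Fin N),
          (if GoodB rowOf colOf B then extCount N B else 0) := by
        refine Finset.sum_congr rfl fun B _ => ?_
        by_cases hg : GoodB rowOf colOf B
        · simp only [hg, true_and, if_pos]
          rw [extCount, Finset.card_filter]
        · simp [hg]
    _ = ∑ B ∈ univ.filter (fun B => GoodB rowOf colOf B), extCount N B := by
        rw [Finset.sum_filter]
    _ = ∑ _B ∈ univ.filter (fun B => GoodB rowOf colOf B), Nat.factorial (N - 2) := by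
        refine Finset.sum_congr rfl fun B hB => ?_
        have hg : GoodB rowOf colOf B := (mem_filter.mp hB).2
        rw [extCount_eq B (goodB_hinj hg), hg.1]
    _ = _ := by rw [Finset.sum_const, smul_eq_mul]

theorem sumFsq (rowOf colOf : Fin N → ℕ)
    (hrowlt : ∀ t, rowOf t < N) (hcollt : ∀ t, colOf t < N) :
    ∑ σ : Equiv.Perm (Fin N), (numDoubleEdges rowOf colOf σ) ^ 2
      = ∑ x ∈ (univ.filter (fun B => GoodB rowOf colOf B))
            ×ˢ (univ.filter (fun B => GoodB rowOf colOf B)),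
          extCount N (x.1 ∪ x.2) := by
  classical
  set D := univ.filter (fun B : Finset (Fin N × Fin N) => GoodB rowOf colOf B) with hD
  calc ∑ σ : Equiv.Perm (Fin N), (numDoubleEdges rowOf colOf σ) ^ 2
      = ∑ σ : Equiv.Perm (Fin N), ∑ x ∈ D ×ˢ D,
          (if Matched σ x.1 ∧ Matched σ x.2 then 1 else 0) := by
        refine Finset.sum_congr rfl fun σ _ => ?_
        rw [numDoubleEdges_eq rowOf colOf hrowlt hcollt σ]
        rw [← Finset.filter_filter (fun B => GoodB rowOf colOf B) (fun B => Matched σ B)]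
        rw [sq, ← Finset.card_product, ← Finset.filter_product, Finset.card_filter]
    _ = ∑ x ∈ D ×ˢ D, ∑ σ : Equiv.Perm (Fin N),
          (if Matched σ x.1 ∧ Matched σ x.2 then 1 else 0) := Finset.sum_comm
    _ = _ := by
        refine Finset.sum_congr rfl fun x _ => ?_
        rw [extCount, Finset.card_filter]
        refine Finset.sum_congr rfl fun σ _ => ?_
        rw [if_congr matched_union.symm rfl rfl]

theorem sumFsq_le (rowOf colOf : Fin N → ℕ)
    (hrowlt : ∀ t, rowOf t < N) (hcollt : ∀ t, colOf t < N) :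
    ∑ σ : Equiv.Perm (Fin N), (numDoubleEdges rowOf colOf σ) ^ 2
      ≤ (univ.filter (fun B => GoodB rowOf colOf B)).card * Nat.factorial (N - 2)
        + (∑ B ∈ univ.filter (fun B => GoodB rowOf colOf B), ∑ p ∈ B,
            (univ.filter (fun B' : Finset (Fin N × Fin N) =>
              GoodB rowOf colOf B' ∧ p ∈ B')).card) * Nat.factorial (N - 3)
        + (univ.filter (fun B => GoodB rowOf colOf B)).card
          * (univ.filter (fun B => GoodB rowOf colOf B)).card * Nat.factorial (N - 4) := by
  classical
  set D := univ.filter (fun B : Finset (Fin N × Fin N) => GoodB rowOf colOf B) with hD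
  have hcard2 : ∀ B ∈ D, B.card = 2 := fun B hB => ((mem_filter.mp hB).2).1
  rw [sumFsq rowOf colOf hrowlt hcollt]
  rw [← Finset.sum_filter_add_sum_filter_not (D ×ˢ D) (fun x => x.1 = x.2)]
  rw [← Finset.sum_filter_add_sum_filter_not
    ((D ×ˢ D).filter (fun x => ¬ x.1 = x.2)) (fun x => (x.1 ∩ x.2).card = 1)]
  have hterm1 : ∑ x ∈ (D ×ˢ D).filter (fun x => x.1 = x.2), extCount N (x.1 ∪ x.2)
      ≤ D.card * Nat.factorial (N - 2) := by
    have hb : ∀ x ∈ (D ×ˢ D).filter (fun x => x.1 = x.2),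
        extCount N (x.1 ∪ x.2) ≤ Nat.factorial (N - 2) := by
      rintro ⟨B, B'⟩ hx
      simp only [mem_filter, mem_product] at hx
      obtain ⟨⟨h1, -⟩, h2⟩ := hx
      subst h2
      rw [Finset.union_self]
      have := extCount_le (N := N) B
      rwa [hcard2 B h1] at this
    refine (Finset.sum_le_card_nsmul _ _ _ hb).trans ?_
    rw [smul_eq_mul]
    apply Nat.mul_le_mul_right
    apply Finset.card_le_card_of_injOn Prod.fst
    · rintro ⟨B, B'⟩ hx
      exact (mem_product.mp (mem_filter.mp hx).1).1
    · rintro ⟨B1, B1'⟩ h1 ⟨B2, B2'⟩ h2 he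
      simp only [coe_filter, Set.mem_setOf_eq] at h1 h2
      simp only at he
      rw [Prod.ext_iff]
      exact ⟨he, by rw [← h1.2, ← h2.2, he]⟩
  have hterm2 : ∑ x ∈ ((D ×ˢ D).filter (fun x => ¬ x.1 = x.2)).filter
        (fun x => (x.1 ∩ x.2).card = 1), extCount N (x.1 ∪ x.2)
      ≤ (∑ B ∈ D, ∑ p ∈ B,
            (univ.filter (fun B' : Finset (Fin N × Fin N) =>
              GoodB rowOf colOf B' ∧ p ∈ B')).card) * Nat.factorial (N - 3) := by
    have hb : ∀ x ∈ ((D ×ˢ D).filter (fun x => ¬ x.1 = x.2)).filter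
        (fun x => (x.1 ∩ x.2).card = 1),
        extCount N (x.1 ∪ x.2) ≤ Nat.factorial (N - 3) := by
      rintro ⟨B, B'⟩ hx
      simp only [mem_filter, mem_product] at hx
      obtain ⟨⟨⟨h1, h1'⟩, -⟩, h2⟩ := hx
      have hu : (B ∪ B').card = 3 := by
        have := Finset.card_union_add_card_inter B B'
        rw [h2, hcard2 B h1, hcard2 B' h1'] at this
        omega
      have := extCount_le (N := N) (B ∪ B')
      rwa [hu] at this
    refine (Finset.sum_le_card_nsmul _ _ _ hb).trans ?_
    rw [smul_eq_mul]
    apply Nat.mul_le_mul_right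
    calc (((D ×ˢ D).filter (fun x => ¬ x.1 = x.2)).filter
          (fun x => (x.1 ∩ x.2).card = 1)).card
        ≤ ((D ×ˢ D).filter (fun x => (x.1 ∩ x.2).card = 1)).card := by
          apply Finset.card_le_card
          intro x hx
          simp only [mem_filter] at hx ⊢
          exact ⟨hx.1.1, hx.2⟩
      _ = ∑ B ∈ D, (((D ×ˢ D).filter (fun x => (x.1 ∩ x.2).card = 1)).filter
            (fun x => x.1 = B)).card := by
          apply Finset.card_eq_sum_card_fiberwise
          intro x hx
          exact (mem_product.mp (mem_filter.mp hx).1).1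
      _ ≤ _ := by
          refine Finset.sum_le_sum fun B hB => ?_
          calc (((D ×ˢ D).filter (fun x => (x.1 ∩ x.2).card = 1)).filter
                (fun x => x.1 = B)).card
              ≤ (B.biUnion (fun p => univ.filter
                  (fun B' : Finset (Fin N × Fin N) =>
                    GoodB rowOf colOf B' ∧ p ∈ B'))).card := by
                apply Finset.card_le_card_of_injOn Prod.snd
                · rintro ⟨B1, B'⟩ hx
                  simp only [mem_coe, mem_filter, mem_product] at hx
                  obtain ⟨⟨⟨-, hB'⟩, hint⟩, hfst⟩ := hx
                  subst hfst
                  obtain ⟨p, hp⟩ := Finset.card_pos.mp (by rw [hint]; norm_num :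
                    0 < (B1 ∩ B').card)
                  rw [mem_coe, mem_biUnion]
                  refine ⟨p, (Finset.mem_inter.mp hp).1, ?_⟩
                  simp only [mem_filter, mem_univ, true_and]
                  exact ⟨(mem_filter.mp hB').2, (Finset.mem_inter.mp hp).2⟩
                · rintro ⟨B1, B1'⟩ h1 ⟨B2, B2'⟩ h2 he
                  simp only [coe_filter, Set.mem_setOf_eq] at h1 h2
                  simp only at he
                  rw [Prod.ext_iff]
                  exact ⟨h1.2.trans h2.2.symm, he⟩
              _ ≤ _ := Finset.card_biUnion_le
  have hterm3 : ∑ x ∈ ((D ×ˢ D).filter (fun x => ¬ x.1 = x.2)).filter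
        (fun x => ¬ (x.1 ∩ x.2).card = 1), extCount N (x.1 ∪ x.2)
      ≤ D.card * D.card * Nat.factorial (N - 4) := by
    have hb : ∀ x ∈ ((D ×ˢ D).filter (fun x => ¬ x.1 = x.2)).filter
        (fun x => ¬ (x.1 ∩ x.2).card = 1),
        extCount N (x.1 ∪ x.2) ≤ Nat.factorial (N - 4) := by
      rintro ⟨B, B'⟩ hx
      simp only [mem_filter, mem_product] at hx
      obtain ⟨⟨⟨h1, h1'⟩, hne⟩, h2⟩ := hx
      have hint0 : (B ∩ B').card = 0 := by
        have hle : (B ∩ B').card ≤ 2 := by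
          rw [← hcard2 B h1]
          exact Finset.card_le_card Finset.inter_subset_left
        rcases Nat.lt_or_ge (B ∩ B').card 1 with h | h
        · omega
        · exfalso
          have h2' : (B ∩ B').card = 2 := by omega
          have e1 : B ∩ B' = B := Finset.eq_of_subset_of_card_le
            Finset.inter_subset_left (by rw [h2', hcard2 B h1])
          have e2 : B ∩ B' = B' := Finset.eq_of_subset_of_card_le
            Finset.inter_subset_right (by rw [h2', hcard2 B' h1'])
          exact hne (e1.symm.trans e2)
      have hu : (B ∪ B').card = 4 := by
        have := Finset.card_union_add_card_inter B B'
        rw [hint0, hcard2 B h1, hcard2 B' h1'] at this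
        omega
      have := extCount_le (N := N) (B ∪ B')
      rwa [hu] at this
    refine (Finset.sum_le_card_nsmul _ _ _ hb).trans ?_
    rw [smul_eq_mul]
    apply Nat.mul_le_mul_right
    calc _ ≤ (D ×ˢ D).card := by
          apply Finset.card_le_card
          intro x hx
          exact (mem_filter.mp (mem_filter.mp hx).1).1
      _ = D.card * D.card := Finset.card_product D D
  omega

end VarFP

set_option maxHeartbeats 2000000 in
open VarFP in
/-- if `μ(N) ≤ C` for all large `N`, then
`Var(F) ≤ μ(N)·(1 + 2√(2 μ(N))·(1 + O(1/N)) + O(μ(N)/N))`. -/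
theorem varF_le_of_mu_bounded
    (r c : ℕ → ℕ → ℕ)
    (hrsupp : ∀ N i, N ≤ i → r N i = 0) (hcsupp : ∀ N j, N ≤ j → c N j = 0)
    (hrN : ∀ N, ∑ i ∈ Finset.range N, r N i = N)
    (hcN : ∀ N, ∑ j ∈ Finset.range N, c N j = N)
    (rowOf colOf : (N : ℕ) → Fin N → ℕ)
    (hrow : ∀ N i, (univ.filter (fun t => rowOf N t = i)).card = r N i)
    (hcol : ∀ N j, (univ.filter (fun t => colOf N t = j)).card = c N j)
    (hC : ∃ C : ℝ, ∃ N₀ : ℕ, ∀ N ≥ N₀, muN r c N ≤ C) :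
    ∃ C' : ℝ, ∃ N₁ : ℕ, ∀ N ≥ N₁,
      varF rowOf colOf N
        ≤ muN r c N * (1 + 2 * Real.sqrt (2 * muN r c N) * (1 + C' / N)
            + C' * muN r c N / N) := by
  classical
  clear hC hrN hcN
  refine ⟨20, 6, fun N hN => ?_⟩
  have hrowlt : ∀ t, rowOf N t < N := by
    intro t
    by_contra hcon
    push_neg at hcon
    have h0 := hrow N (rowOf N t)
    rw [hrsupp N _ hcon, Finset.card_eq_zero] at h0
    have ht : t ∈ univ.filter (fun s => rowOf N s = rowOf N t) :=
      mem_filter.mpr ⟨mem_univ t, rfl⟩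
    rw [h0] at ht
    exact absurd ht (Finset.notMem_empty t)
  have hcollt : ∀ t, colOf N t < N := by
    intro t
    by_contra hcon
    push_neg at hcon
    have h0 := hcol N (colOf N t)
    rw [hcsupp N _ hcon, Finset.card_eq_zero] at h0
    have ht : t ∈ univ.filter (fun s => colOf N s = colOf N t) :=
      mem_filter.mpr ⟨mem_univ t, rfl⟩
    rw [h0] at ht
    exact absurd ht (Finset.notMem_empty t)
  set D := univ.filter (fun B : Finset (Fin N × Fin N) => GoodB (rowOf N) (colOf N) B)
    with hD
  have desc2 : ∀ m : ℕ, Nat.descFactorial m 2 = (m - 1) * m := by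
    intro m; rw [Nat.descFactorial_succ, Nat.descFactorial_one]
  -- exact count of D
  have hd2 : 2 * D.card = ∑ i ∈ Finset.range N, ∑ j ∈ Finset.range N,
      Nat.descFactorial (r N i) 2 * Nat.descFactorial (c N j) 2 := by
    have h := collapse (rowOf N) (colOf N) hrowlt hcollt (fun _ => True)
    simp only [and_true] at h
    rw [hD, ← h, Finset.mul_sum]
    refine Finset.sum_congr rfl fun i _ => ?_
    rw [Finset.mul_sum]
    refine Finset.sum_congr rfl fun j _ => ?_
    rw [count_de (rowOf N) (colOf N) i j, hrow N i, hcol N j]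
  -- real abbreviations
  have hN6 : (6:ℝ) ≤ (N:ℝ) := by exact_mod_cast hN
  have hNpos : (0:ℝ) < (N:ℝ) := by linarith only [hN6]
  set μ := muN r c N with hμ
  have hμnn : 0 ≤ μ := by
    rw [hμ, muN]
    positivity
  set n2 : ℝ := (Nat.descFactorial N 2 : ℝ) with hn2
  have hn2v : n2 = ((N:ℝ) - 1) * (N:ℝ) := by
    rw [hn2, desc2 N, Nat.cast_mul, Nat.cast_sub (by omega : 1 ≤ N)]
    push_cast
    ring
  have hn2pos : 0 < n2 := by rw [hn2v]; nlinarith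
  set n3 : ℝ := (Nat.descFactorial N 3 : ℝ) with hn3
  have hn3v : n3 = ((N:ℝ) - 2) * n2 := by
    rw [hn3, hn2, show (3:ℕ) = 2 + 1 from rfl, Nat.descFactorial_succ,
      Nat.cast_mul, Nat.cast_sub (by omega : 2 ≤ N)]
    push_cast
    ring
  set n4 : ℝ := (Nat.descFactorial N 4 : ℝ) with hn4
  have hn4v : n4 = ((N:ℝ) - 3) * n3 := by
    rw [hn4, hn3, show (4:ℕ) = 3 + 1 from rfl, Nat.descFactorial_succ,
      Nat.cast_mul, Nat.cast_sub (by omega : 3 ≤ N)]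
    push_cast
    ring
  set f0 : ℝ := (Nat.factorial N : ℝ) with hf0
  set f2 : ℝ := (Nat.factorial (N - 2) : ℝ) with hf2
  set f3 : ℝ := (Nat.factorial (N - 3) : ℝ) with hf3
  set f4 : ℝ := (Nat.factorial (N - 4) : ℝ) with hf4
  have hf0pos : 0 < f0 := by rw [hf0]; exact_mod_cast Nat.factorial_pos N
  have hf2pos : 0 < f2 := by rw [hf2]; exact_mod_cast Nat.factorial_pos (N - 2)
  have hf3pos : 0 < f3 := by rw [hf3]; exact_mod_cast Nat.factorial_pos (N - 3)
  have hf4pos : 0 < f4 := by rw [hf4]; exact_mod_cast Nat.factorial_pos (N - 4)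
  have hf02 : f2 * n2 = f0 := by
    rw [hf2, hn2, hf0]
    exact_mod_cast congrArg (Nat.cast (R := ℝ))
      (Nat.factorial_mul_descFactorial (by omega : 2 ≤ N))
  have hf23 : f2 = ((N:ℝ) - 2) * f3 := by
    rw [hf2, hf3, show N - 2 = (N - 3) + 1 by omega, Nat.factorial_succ]
    push_cast [Nat.cast_sub (by omega : 3 ≤ N)]
    ring
  have hf34 : f3 = ((N:ℝ) - 3) * f4 := by
    rw [hf3, hf4, show N - 3 = (N - 4) + 1 by omega, Nat.factorial_succ]
    push_cast [Nat.cast_sub (by omega : 4 ≤ N)]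
    ring
  -- d = μ n2
  have hSsum : μ * (2 * n2) = ∑ i ∈ Finset.range N, ∑ j ∈ Finset.range N,
      ((Nat.descFactorial (r N i) 2 : ℝ) * (Nat.descFactorial (c N j) 2 : ℝ)) := by
    rw [hμ, muN, Finset.sum_mul]
    refine Finset.sum_congr rfl fun i _ => ?_
    rw [Finset.sum_mul]
    refine Finset.sum_congr rfl fun j _ => ?_
    rw [← hn2]
    push_cast
    rw [div_mul_cancel₀]
    positivity
  have hdval : (D.card : ℝ) = μ * n2 := by
    have h2d : ((2 * D.card : ℕ) : ℝ) = μ * (2 * n2) := by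
      rw [hd2, hSsum]
      push_cast
      rfl
    push_cast at h2d
    linarith only [h2d]
  -- E F = μ
  have hsumF : (∑ σ : Equiv.Perm (Fin N), (numDoubleEdges (rowOf N) (colOf N) σ : ℝ))
      = (D.card : ℝ) * f2 := by
    rw [← Nat.cast_sum, sumF (rowOf N) (colOf N) hrowlt hcollt]
    push_cast
    rfl
  have hEF : expF rowOf colOf N = μ := by
    rw [expF, hsumF, ← hf0, ← hf02, hdval]
    field_simp
  -- the shared-entry count bound, uniformly in p
  set K : ℝ := Real.sqrt (2 * μ) * Real.sqrt n2 with hK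
  have hKnn : 0 ≤ K := by positivity
  have hK2 : K ^ 2 = 2 * μ * n2 := by
    rw [hK, mul_pow, Real.sq_sqrt (by linarith : (0:ℝ) ≤ 2 * μ),
      Real.sq_sqrt (le_of_lt hn2pos)]
  have hcnt : ∀ p : Fin N × Fin N,
      ((univ.filter (fun B' : Finset (Fin N × Fin N) =>
        GoodB (rowOf N) (colOf N) B' ∧ p ∈ B')).card : ℝ) ≤ K := by
    intro p
    set cnt : ℕ := (univ.filter (fun B' : Finset (Fin N × Fin N) =>
        GoodB (rowOf N) (colOf N) B' ∧ p ∈ B')).card with hcntd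
    have h1 : cnt ≤ (r N (rowOf N p.1) - 1) * (c N (colOf N p.2) - 1) := by
      have := shared_bound (rowOf N) (colOf N) p
      rwa [hrow N _, hcol N _] at this
    have h2 : ((r N (rowOf N p.1) - 1) * (c N (colOf N p.2) - 1)) ^ 2
        ≤ Nat.descFactorial (r N (rowOf N p.1)) 2
          * Nat.descFactorial (c N (colOf N p.2)) 2 := by
      rw [desc2, desc2, mul_pow, pow_two, pow_two]
      exact Nat.mul_le_mul
        (Nat.mul_le_mul_left _ (Nat.sub_le _ 1)) (Nat.mul_le_mul_left _ (Nat.sub_le _ 1))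
    have h3 : Nat.descFactorial (r N (rowOf N p.1)) 2
          * Nat.descFactorial (c N (colOf N p.2)) 2 ≤ 2 * D.card := by
      rw [hd2]
      calc Nat.descFactorial (r N (rowOf N p.1)) 2
            * Nat.descFactorial (c N (colOf N p.2)) 2
          ≤ ∑ j ∈ Finset.range N, Nat.descFactorial (r N (rowOf N p.1)) 2
              * Nat.descFactorial (c N j) 2 :=
            Finset.single_le_sum
              (f := fun j => Nat.descFactorial (r N (rowOf N p.1)) 2
                * Nat.descFactorial (c N j) 2)
              (fun _ _ => Nat.zero_le _) (Finset.mem_range.mpr (hcollt p.2))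
        _ ≤ _ :=
            Finset.single_le_sum
              (f := fun i => ∑ j ∈ Finset.range N, Nat.descFactorial (r N i) 2
                * Nat.descFactorial (c N j) 2)
              (fun _ _ => Nat.zero_le _) (Finset.mem_range.mpr (hrowlt p.1))
    have hsq : ((cnt : ℝ)) ^ 2 ≤ 2 * μ * n2 := by
      have hc1 : (cnt : ℝ) ^ 2 ≤ (((2 * D.card : ℕ) : ℕ) : ℝ) := by
        have : cnt ^ 2 ≤ 2 * D.card := le_trans (Nat.pow_le_pow_left h1 2) (h2.trans h3)
        exact_mod_cast this
      push_cast at hc1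
      rw [hdval] at hc1
      linarith only [hc1]
    have := Real.le_sqrt (by positivity : (0:ℝ) ≤ (cnt:ℝ))
      (by positivity : (0:ℝ) ≤ 2 * μ * n2)
    rw [hK, ← Real.sqrt_mul (by linarith : (0:ℝ) ≤ 2 * μ)]
    exact (this).mpr hsq
  -- bound for W
  set W : ℕ := ∑ B ∈ D, ∑ p ∈ B, (univ.filter (fun B' : Finset (Fin N × Fin N) =>
      GoodB (rowOf N) (colOf N) B' ∧ p ∈ B')).card with hWd
  have hWle : (W : ℝ) ≤ (D.card : ℝ) * (2 * K) := by
    rw [hWd]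
    push_cast
    calc ∑ B ∈ D, ∑ p ∈ B, ((univ.filter (fun B' : Finset (Fin N × Fin N) =>
            GoodB (rowOf N) (colOf N) B' ∧ p ∈ B')).card : ℝ)
        ≤ ∑ _B ∈ D, 2 * K := by
          refine Finset.sum_le_sum fun B hB => ?_
          have hc2 : B.card = 2 := ((mem_filter.mp hB).2).1
          calc ∑ p ∈ B, ((univ.filter (fun B' : Finset (Fin N × Fin N) =>
                GoodB (rowOf N) (colOf N) B' ∧ p ∈ B')).card : ℝ)
              ≤ ∑ _p ∈ B, K := Finset.sum_le_sum fun p _ => hcnt p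
            _ = 2 * K := by rw [Finset.sum_const, hc2, nsmul_eq_mul]; push_cast; ring
      _ = (D.card : ℝ) * (2 * K) := by rw [Finset.sum_const, nsmul_eq_mul]
  -- variance bound
  have hvar : varF rowOf colOf N
      ≤ ((D.card : ℝ) * f2 + (D.card : ℝ) * (2 * K) * f3
          + (D.card : ℝ) * (D.card : ℝ) * f4) / f0 - μ ^ 2 := by
    rw [varF, hEF, ← hf0]
    have hcast : (∑ σ : Equiv.Perm (Fin N), (numDoubleEdges (rowOf N) (colOf N) σ : ℝ) ^ 2)
        = ((∑ σ : Equiv.Perm (Fin N), (numDoubleEdges (rowOf N) (colOf N) σ) ^ 2 : ℕ) : ℝ) := by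
      push_cast
      rfl
    rw [hcast]
    apply sub_le_sub_right
    have h := sumFsq_le (rowOf N) (colOf N) hrowlt hcollt
    rw [← hWd, ← hD] at h
    have h' : ((∑ σ : Equiv.Perm (Fin N),
          (numDoubleEdges (rowOf N) (colOf N) σ) ^ 2 : ℕ) : ℝ)
        ≤ (D.card : ℝ) * f2 + (W : ℝ) * f3 + (D.card : ℝ) * (D.card : ℝ) * f4 := by
      calc ((∑ σ : Equiv.Perm (Fin N),
            (numDoubleEdges (rowOf N) (colOf N) σ) ^ 2 : ℕ) : ℝ)
          ≤ ((D.card * Nat.factorial (N - 2) + W * Nat.factorial (N - 3)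
              + D.card * D.card * Nat.factorial (N - 4) : ℕ) : ℝ) := Nat.cast_le.mpr h
        _ = (D.card : ℝ) * f2 + (W : ℝ) * f3 + (D.card : ℝ) * (D.card : ℝ) * f4 := by
            rw [hf2, hf3, hf4]
            push_cast
            ring
    have hWf3 : (W : ℝ) * f3 ≤ (D.card : ℝ) * (2 * K) * f3 :=
      mul_le_mul_of_nonneg_right hWle (le_of_lt hf3pos)
    exact div_le_div_of_nonneg_right (le_trans h' (by linarith only [hWf3])) (le_of_lt hf0pos)
  -- algebraic identity for the bound
  have h2ne : ((N:ℝ) - 2) ≠ 0 := by linarith only [hN6]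
  have h3ne : ((N:ℝ) - 3) ≠ 0 := by linarith only [hN6]
  have h2pos : (0:ℝ) < (N:ℝ) - 2 := by linarith only [hN6]
  have h3pos : (0:ℝ) < (N:ℝ) - 3 := by linarith only [hN6]
  have hf0ne : f0 ≠ 0 := ne_of_gt hf0pos
  have heq : ((D.card : ℝ) * f2 + (D.card : ℝ) * (2 * K) * f3
        + (D.card : ℝ) * (D.card : ℝ) * f4) / f0
      = μ + 2 * μ * K / ((N:ℝ) - 2)
        + μ ^ 2 * (n2 / (((N:ℝ) - 2) * ((N:ℝ) - 3))) := by
    have e1 : (D.card : ℝ) * f2 / f0 = μ := by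
      rw [hdval, ← hf02, div_eq_iff (ne_of_gt (mul_pos hf2pos hn2pos))]
      ring
    have e2 : (D.card : ℝ) * (2 * K) * f3 / f0 = 2 * μ * K / ((N:ℝ) - 2) := by
      rw [hdval, ← hf02, hf23,
        div_eq_div_iff (ne_of_gt (by positivity)) (ne_of_gt h2pos)]
      ring
    have e3 : (D.card : ℝ) * (D.card : ℝ) * f4 / f0
        = μ ^ 2 * (n2 / (((N:ℝ) - 2) * ((N:ℝ) - 3))) := by
      have hr : μ ^ 2 * (n2 / (((N:ℝ) - 2) * ((N:ℝ) - 3)))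
          = μ ^ 2 * n2 / (((N:ℝ) - 2) * ((N:ℝ) - 3)) := by ring
      rw [hr, hdval, ← hf02, hf23, hf34,
        div_eq_div_iff (ne_of_gt (by positivity)) (ne_of_gt (mul_pos h2pos h3pos))]
      ring
    rw [add_div, add_div, e1, e2, e3]
  rw [heq] at hvar
  -- numeric bounds
  have htN : Real.sqrt n2 ≤ (N:ℝ) := by
    have hle : n2 ≤ (N:ℝ) ^ 2 := by rw [hn2v]; nlinarith
    calc Real.sqrt n2 ≤ Real.sqrt ((N:ℝ) ^ 2) := Real.sqrt_le_sqrt hle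
      _ = (N:ℝ) := Real.sqrt_sq (le_of_lt hNpos)
  have hs1 : Real.sqrt n2 / ((N:ℝ) - 2) ≤ 1 + 20 / (N:ℝ) := by
    rw [div_le_iff₀ h2pos]
    have hexp : (1 + 20 / (N:ℝ)) * ((N:ℝ) - 2) = (N:ℝ) + 18 - 40 / (N:ℝ) := by
      field_simp
      ring
    rw [hexp]
    have h40 : 40 / (N:ℝ) ≤ 8 := by
      rw [div_le_iff₀ hNpos]; linarith only [hN6]
    linarith only [htN, h40]
  have hs2 : n2 / (((N:ℝ) - 2) * ((N:ℝ) - 3)) ≤ 1 + 20 / (N:ℝ) := by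
    have h1p : 1 + 20 / (N:ℝ) = ((N:ℝ) + 20) / (N:ℝ) := by field_simp
    rw [h1p, div_le_div_iff₀ (mul_pos h2pos h3pos) hNpos, hn2v]
    nlinarith only [hN6, mul_nonneg (by linarith only [hN6] : (0:ℝ) ≤ (N:ℝ) - 6) (le_of_lt hNpos)]
  have hm1 : 2 * μ * K / ((N:ℝ) - 2)
      ≤ 2 * μ * (Real.sqrt (2 * μ) * (1 + 20 / (N:ℝ))) := by
    have hrw : 2 * μ * K / ((N:ℝ) - 2)
        = (2 * μ * Real.sqrt (2 * μ)) * (Real.sqrt n2 / ((N:ℝ) - 2)) := by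
      rw [hK]; ring
    rw [hrw]
    have hnn : (0:ℝ) ≤ 2 * μ * Real.sqrt (2 * μ) := by positivity
    calc (2 * μ * Real.sqrt (2 * μ)) * (Real.sqrt n2 / ((N:ℝ) - 2))
        ≤ (2 * μ * Real.sqrt (2 * μ)) * (1 + 20 / (N:ℝ)) :=
          mul_le_mul_of_nonneg_left hs1 hnn
      _ = 2 * μ * (Real.sqrt (2 * μ) * (1 + 20 / (N:ℝ))) := by ring
  have hm2 : μ ^ 2 * (n2 / (((N:ℝ) - 2) * ((N:ℝ) - 3))) ≤ μ ^ 2 * (1 + 20 / (N:ℝ)) :=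
    mul_le_mul_of_nonneg_left hs2 (sq_nonneg μ)
  have hfin : μ + 2 * μ * (Real.sqrt (2 * μ) * (1 + 20 / (N:ℝ)))
        + μ ^ 2 * (1 + 20 / (N:ℝ)) - μ ^ 2
      = μ * (1 + 2 * Real.sqrt (2 * μ) * (1 + 20 / (N:ℝ)) + 20 * μ / (N:ℝ)) := by
    field_simp
    ring
  linarith only [hvar, hm1, hm2, hfin, hμnn]
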